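/- Let R be a reduced excellent commutative ring of Krull dimension one with total ring of fractions K, U a finitely generated K-module, and L ⊆ U an R-lattice (a finitely generated R-submodule with K·L = U). Then L equals the set of x ∈ U whose image in the completion Û_m = K̂_m ⊗_K U lies in the image of L̂_m = R̂_m ⊗_R L, for every maximal ideal m of R. -/

import Mathlib

open scoped TensorProduct

/-- Stand-in for excellence of a one-dimensional reduced noetherian ring.  Excellent
rings are not yet available in Mathlib; we encode the consequence of excellence that is
used throughout the paper, namely that the completion at every maximal ideal is again
reduced ("analytically reduced"). -/
def IsExcellentStandIn (R : Type*) [CommRing R] : Prop :=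
  ∀ m : Ideal R, m.IsMaximal → IsReduced (AdicCompletion m R)

/-- The key lemma: if the image of `x` in `R̂_𝔪 ⊗[R] U` lies in the span of the image of
the submodule `L` for every maximal ideal `𝔪`, then `x ∈ L`.  No finiteness of `L` or
`U` is needed; only noetherianity of `R` (which gives flatness of the adic completion).

Sketch: assume `x ∉ L` and let `q ≠ 0` be its class in `Q = U ⧸ L`.  Choose a maximal
ideal `𝔪 ⊇ Ann(q)` and let `A = R̂_𝔪`.  The hypothesis together with right exactness of
`A ⊗ -` gives `1 ⊗ q = 0` in `A ⊗ Q`.  By flatness of `A`, tensoring the exact sequence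
`Ann(q) → R → Q` (the last map being `r ↦ r • q`) shows `1 ∈ Ann(q)·A ⊆ 𝔪·A`.  Applying
the evaluation `A → R/𝔪` yields `1 = 0` in the field `R/𝔪`, a contradiction. -/
theorem mem_of_all_completions_aux
    (R : Type*) [CommRing R] [IsNoetherianRing R]
    (U : Type*) [AddCommGroup U] [Module R U]
    (L : Submodule R U) (x : U)
    (hx : ∀ m : Ideal R, m.IsMaximal →
      (1 ⊗ₜ[R] x : AdicCompletion m R ⊗[R] U) ∈
        Submodule.span (AdicCompletion m R)
          ((fun y : U => (1 ⊗ₜ[R] y : AdicCompletion m R ⊗[R] U)) '' L)) :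
    x ∈ L := by
  set Q := U ⧸ L
  set q : Q := L.mkQ x with hq
  rw [← Submodule.Quotient.mk_eq_zero]
  show q = 0
  by_contra hq0
  have hJ : Ideal.torsionOf R Q q ≠ ⊤ :=
    fun h => hq0 (by rwa [Ideal.torsionOf_eq_top_iff] at h)
  obtain ⟨m, hm, hJm⟩ := Ideal.exists_le_maximal _ hJ
  set A := AdicCompletion m R
  haveI : Module.Flat R A := AdicCompletion.flat_of_isNoetherian (I := m)
  -- Step 1: the image of `x` in `A ⊗ Q` is zero.
  have h1 : (1 ⊗ₜ[R] q : A ⊗[R] Q) = 0 := by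
    have hsub : Submodule.span A ((fun y : U => (1 ⊗ₜ[R] y : A ⊗[R] U)) '' L)
        ≤ LinearMap.range (L.subtype.baseChange A) := by
      rw [Submodule.span_le]
      rintro _ ⟨y, hy, rfl⟩
      exact ⟨1 ⊗ₜ ⟨y, hy⟩, by simp⟩
    have hmem := hsub (hx m hm)
    have hexact : Function.Exact (LinearMap.lTensor A L.subtype)
        (LinearMap.lTensor A L.mkQ) :=
      Module.Flat.lTensor_exact A (LinearMap.exact_subtype_mkQ L)
    have hmem' : (1 ⊗ₜ[R] x : A ⊗[R] U) ∈ LinearMap.range (LinearMap.lTensor A L.subtype) := by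
      obtain ⟨w, hw⟩ := hmem
      exact ⟨w, by rw [← hw, ← LinearMap.baseChange_eq_ltensor]⟩
    have := (hexact (1 ⊗ₜ[R] x)).mpr hmem'
    rwa [LinearMap.lTensor_tmul] at this
  -- Step 2: contradiction via flatness and the evaluation `A → R/m`.
  have hexact2 : Function.Exact ((Ideal.torsionOf R Q q).subtype)
      (LinearMap.toSpanSingleton R Q q) := by
    rw [LinearMap.exact_iff, Submodule.range_subtype]
    rfl
  have hexact2' := Module.Flat.lTensor_exact A hexact2
  have h2 : (LinearMap.lTensor A (LinearMap.toSpanSingleton R Q q)) (1 ⊗ₜ[R] (1 : R)) = 0 := by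
    rw [LinearMap.lTensor_tmul, LinearMap.toSpanSingleton_apply, one_smul, h1]
  obtain ⟨w, hw⟩ := (hexact2' (1 ⊗ₜ[R] (1 : R))).mp h2
  have h3 : ∀ v : A ⊗[R] (Ideal.torsionOf R Q q),
      (TensorProduct.rid R A).toLinearMap
        ((LinearMap.lTensor A (Ideal.torsionOf R Q q).subtype) v)
      ∈ Ideal.map (algebraMap R A) (Ideal.torsionOf R Q q) := by
    intro v
    induction v using TensorProduct.induction_on with
    | zero => rw [map_zero, map_zero]; exact Ideal.zero_mem _
    | tmul c j =>
        rw [LinearMap.lTensor_tmul, LinearEquiv.coe_coe, TensorProduct.rid_tmul,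
          Submodule.coe_subtype, Algebra.smul_def]
        exact Ideal.mul_mem_right _ _ (Ideal.mem_map_of_mem _ j.2)
    | add y z hy hz =>
        rw [map_add, map_add]
        exact Ideal.add_mem _ hy hz
  have h3' := h3 w
  rw [hw, LinearEquiv.coe_coe, TensorProduct.rid_tmul, one_smul] at h3'
  have h4 : (1 : A) ∈ Ideal.map (algebraMap R A) m :=
    Ideal.map_mono hJm h3'
  have h5 : ((AdicCompletion.evalₐ m 1 : A →ₐ[R] R ⧸ m ^ 1) : A →+* R ⧸ m ^ 1) 1
      ∈ Ideal.map ((AdicCompletion.evalₐ m 1 : A →ₐ[R] R ⧸ m ^ 1) : A →+* R ⧸ m ^ 1)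
        (Ideal.map (algebraMap R A) m) := Ideal.mem_map_of_mem _ h4
  rw [Ideal.map_map, AlgHom.comp_algebraMap, map_one] at h5
  have h7 : Ideal.map (algebraMap R (R ⧸ m ^ 1)) m = ⊥ := by
    rw [Ideal.Quotient.algebraMap_eq, pow_one, Ideal.map_quotient_self]
  rw [h7, Ideal.mem_bot] at h5
  haveI : Nontrivial (R ⧸ m ^ 1) := by
    rw [pow_one]
    exact Ideal.Quotient.nontrivial_iff.mpr hm.ne_top
  exact one_ne_zero h5

/-- Let `R` be a reduced excellent commutative noetherian ring of Krull dimension one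
with total ring of fractions `K`, `U` a finitely generated `K`-module, and `L ⊆ U` an
`R`-lattice (a finitely generated `R`-submodule with `K·L = U`).  Then `L` equals the
set of `x ∈ U` whose image in the completion `Û_𝔪 = R̂_𝔪 ⊗[R] U` (which is canonically
`K̂_𝔪 ⊗[K] U`) lies in the image of `L̂_𝔪 = R̂_𝔪 ⊗[R] L`, for every maximal ideal `𝔪`
of `R`. -/
theorem lattice_eq_of_all_completions
    (R : Type*) [CommRing R] [IsNoetherianRing R] [IsReduced R]
    (hdim : ringKrullDim R = 1) (hexc : IsExcellentStandIn R)
    (U : Type*) [AddCommGroup U] [Module (FractionRing R) U]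
    [Module.Finite (FractionRing R) U] [Module R U]
    [IsScalarTower R (FractionRing R) U]
    (L : Submodule R U) (hLfg : L.FG)
    (hLfull : Submodule.span (FractionRing R) (L : Set U) = ⊤) :
    (L : Set U) = {x : U | ∀ m : Ideal R, m.IsMaximal →
      (1 ⊗ₜ[R] x : AdicCompletion m R ⊗[R] U) ∈
        Submodule.span (AdicCompletion m R)
          ((fun y : U => (1 ⊗ₜ[R] y : AdicCompletion m R ⊗[R] U)) '' L)} := by
  ext x
  constructor
  · intro hx m hm
    exact Submodule.subset_span ⟨x, hx, rfl⟩
  · intro hx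
    exact mem_of_all_completions_aux R U L x hx
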